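/- Let G be a graph on n vertices with maximum vertex degree Δ, and let 0 < ε < 1. If each vertex is sampled independently with probability p = (1-ε)/Δ, then with high probability (probability at least 1 - 1/n for sufficiently large n) the largest connected component of the induced subgraph on the sampled vertices has size at most (4/ε²)·log n. -/

import Mathlib

open Finset

noncomputable def Bf (p : ℝ) : ℕ → ℕ → ℝ
  | 0, j => if j = 0 then 1 else 0
  | m + 1, j => p * Bf p m (j - 1) + (1 - p) * Bf p m j

section Bf
variable {p : ℝ}

lemma Bf_nonneg (hp0 : 0 ≤ p) (hp1 : p ≤ 1) : ∀ m j, 0 ≤ Bf p m j := by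
  intro m
  induction m with
  | zero => intro j; simp only [Bf]; split <;> norm_num
  | succ m ih =>
    intro j
    simp only [Bf]
    have := ih (j - 1); have := ih j
    nlinarith

lemma Bf_zero_right : ∀ m, Bf p m 0 = 1 := by
  intro m
  induction m with
  | zero => simp [Bf]
  | succ m ih => simp [Bf, ih]

lemma Bf_anti (hp0 : 0 ≤ p) (hp1 : p ≤ 1) : ∀ m {j j'}, j ≤ j' → Bf p m j' ≤ Bf p m j := by
  intro m
  induction m with
  | zero =>
    intro j j' hj
    simp only [Bf]
    split <;> split <;> try norm_num
    omega
  | succ m ih =>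
    intro j j' hj
    simp only [Bf]
    have h1 := ih (Nat.sub_le_sub_right hj 1)
    have h2 := ih hj
    nlinarith

lemma Bf_mono (hp0 : 0 ≤ p) (hp1 : p ≤ 1) : ∀ {m m'} (j), m ≤ m' → Bf p m j ≤ Bf p m' j := by
  intro m m' j h
  induction h with
  | refl => exact le_refl _
  | @step m' h ih =>
    refine le_trans ih ?_
    show Bf p m' j ≤ Bf p (m' + 1) j
    simp only [Bf]
    have h1 := Bf_anti hp0 hp1 m' (Nat.sub_le j 1)
    nlinarith

lemma Bf_le_one (hp0 : 0 ≤ p) (hp1 : p ≤ 1) : ∀ m j, Bf p m j ≤ 1 := by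
  intro m j
  have := Bf_anti hp0 hp1 m (Nat.zero_le j)
  rwa [Bf_zero_right] at this

lemma Bf_chernoff (hp0 : 0 ≤ p) (hp1 : p ≤ 1) {t : ℝ} (ht : 1 ≤ t) :
    ∀ m j, Bf p m j ≤ (1 - p + p * t) ^ m / t ^ j := by
  have ht0 : 0 < t := lt_of_lt_of_le one_pos ht
  have hc1 : 1 ≤ 1 - p + p * t := by nlinarith
  have hc0 : 0 ≤ 1 - p + p * t := by linarith
  intro m
  induction m with
  | zero =>
    intro j
    cases j with
    | zero => simp [Bf]
    | succ j =>
      simp only [Bf]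
      norm_num
      positivity
  | succ m ih =>
    intro j
    cases j with
    | zero =>
      simp only [pow_zero, div_one]
      calc Bf p (m+1) 0 = 1 := Bf_zero_right _
        _ ≤ (1 - p + p * t) ^ (m+1) := one_le_pow₀ hc1
    | succ j =>
      simp only [Bf, Nat.add_sub_cancel]
      have h1 := ih j
      have h2 := ih (j + 1)
      have htj : (0:ℝ) < t ^ j := pow_pos ht0 j
      have htj1 : (0:ℝ) < t ^ (j+1) := pow_pos ht0 (j+1)
      have key : p * ((1 - p + p * t) ^ m / t ^ j) + (1 - p) * ((1 - p + p * t) ^ m / t ^ (j+1))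
          = (1 - p + p * t) ^ (m+1) / t ^ (j+1) := by
        field_simp
        ring
      have hq : (0:ℝ) ≤ 1 - p := by linarith
      calc p * Bf p m j + (1 - p) * Bf p m (j + 1)
          ≤ p * ((1 - p + p * t) ^ m / t ^ j) + (1 - p) * ((1 - p + p * t) ^ m / t ^ (j+1)) := by
            gcongr
        _ = (1 - p + p * t) ^ (m+1) / t ^ (j+1) := key

end Bf

lemma log_one_sub_le {x : ℝ} (h0 : 0 < x) (h1 : x < 1) :
    Real.log (1 - x) ≤ -x - x ^ 2 / 2 := by
  have hs := Real.hasSum_pow_div_log_of_abs_lt_one (x := x) (by rwa [abs_of_pos h0])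
  have hle : x + x ^ 2 / 2 ≤ -Real.log (1 - x) := by
    have h2 := sum_le_hasSum (Finset.range 2) (fun i _ => by positivity) hs
    norm_num [Finset.sum_range_succ] at h2
    linarith
  linarith

lemma exp_mul_one_sub_le {x : ℝ} (h0 : 0 < x) (h1 : x < 1) :
    Real.exp x * (1 - x) ≤ Real.exp (-(x ^ 2) / 2) := by
  have h : (1 - x) = Real.exp (Real.log (1 - x)) := (Real.exp_log (by linarith)).symm
  rw [h, ← Real.exp_add]
  apply Real.exp_le_exp.mpr
  have := log_one_sub_le h0 h1
  linarith


/-- The subgraph of `G` restricted to edges with both endpoints in `S`. -/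
def withinGraph {V : Type*} (G : SimpleGraph V) (S : Finset V) : SimpleGraph V where
  Adj u v := G.Adj u v ∧ u ∈ S ∧ v ∈ S
  symm := by constructor; intro u v h; exact ⟨h.1.symm, h.2.2, h.2.1⟩
  loopless := by constructor; intro v h; exact G.irrefl h.1

open Classical in
/-- The number of vertices of the largest connected component of the subgraph of `G`
induced by the vertex set `S`. -/
noncomputable def maxCompSize {V : Type*} [Fintype V] (G : SimpleGraph V) (S : Finset V) : ℕ :=
  S.sup fun v => (S.filter fun u => (withinGraph G S).Reachable v u).card

section Graph
variable {V : Type*} [Fintype V] [DecidableEq V] (G : SimpleGraph V) [DecidableRel G.Adj]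

noncomputable def nbrs (x : V) : List V := (G.neighborFinset x).toList

lemma mem_nbrs {x z : V} : z ∈ nbrs G x ↔ G.Adj x z := by
  simp [nbrs, SimpleGraph.mem_neighborFinset]

lemma length_nbrs (x : V) : (nbrs G x).length = G.degree x := by
  rw [nbrs, Finset.length_toList, SimpleGraph.degree]

open Classical in
noncomputable def Xs (q : List V) (A : Finset V) : Finset V :=
  A.filter (fun u => ∃ x ∈ q, (withinGraph G A).Reachable x u)

lemma withinGraph_mono {A B : Finset V} (h : A ⊆ B) : withinGraph G A ≤ withinGraph G B :=
  fun _ _ ha => ⟨ha.1, h ha.2.1, h ha.2.2⟩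

lemma W2 {A : Finset V} {x u : V} (hx : x ∉ A) (hu : u ∈ A)
    (h : (withinGraph G A).Reachable x u) : False := by
  obtain ⟨w⟩ := h
  cases w with
  | nil => exact hx hu
  | cons h p => exact hx h.2.1

lemma W1 {A : Finset V} {x u y : V} (hu : u ≠ x)
    (h : (withinGraph G A).Reachable y u) :
    (y ≠ x ∧ (withinGraph G (A.erase x)).Reachable y u) ∨
      (∃ z, G.Adj x z ∧ (withinGraph G (A.erase x)).Reachable z u) := by
  obtain ⟨w⟩ := h
  induction w with
  | nil => exact Or.inl ⟨hu, SimpleGraph.Reachable.refl _⟩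
  | @cons y b u h p ih =>
    rcases ih hu with ⟨hb, hr⟩ | hr
    · by_cases hy : y = x
      · exact Or.inr ⟨b, hy ▸ h.1, hr⟩
      · refine Or.inl ⟨hy, SimpleGraph.Reachable.trans ?_ hr⟩
        exact SimpleGraph.Adj.reachable
          ⟨h.1, Finset.mem_erase.mpr ⟨hy, h.2.1⟩, Finset.mem_erase.mpr ⟨hb, h.2.2⟩⟩
    · exact Or.inr hr

lemma W3 {A : Finset V} {x u z : V} (hx : x ∈ A) (hu : u ∈ A.erase x) (hadj : G.Adj x z)
    (h : (withinGraph G (A.erase x)).Reachable z u) :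
    (withinGraph G A).Reachable x u := by
  have hz : z ∈ A.erase x := by
    obtain ⟨w⟩ := h
    cases w with
    | nil => exact hu
    | cons h p => exact h.2.1
  have hmono := SimpleGraph.Reachable.mono (withinGraph_mono G (Finset.erase_subset x A)) h
  exact SimpleGraph.Reachable.trans
    (SimpleGraph.Adj.reachable ⟨hadj, hx, (Finset.mem_erase.mp hz).2⟩) hmono
end Graph

set_option linter.unusedSectionVars false

section Graph2
variable {V : Type*} [Fintype V] [DecidableEq V] (G : SimpleGraph V) [DecidableRel G.Adj]

open Classical in
lemma Xs_subset (q : List V) (A : Finset V) : Xs G q A ⊆ A :=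
  Finset.filter_subset _ _

lemma Xs_nil (A : Finset V) : Xs G [] A = ∅ := by
  simp [Xs]

lemma Xs_drop {x : V} {A : Finset V} (hx : x ∉ A) (qs : List V) :
    Xs G (x :: qs) A = Xs G qs A := by
  classical
  apply Finset.filter_congr
  intro u hu
  simp only [List.mem_cons, eq_iff_iff]
  constructor
  · rintro ⟨y, (rfl | hy), hr⟩
    · exact absurd hr (fun hr => W2 G hx hu hr)
    · exact ⟨y, hy, hr⟩
  · rintro ⟨y, hy, hr⟩
    exact ⟨y, Or.inr hy, hr⟩

lemma Xs_insert {x : V} {A : Finset V} (hx : x ∈ A) (qs : List V) :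
    Xs G (x :: qs) A = insert x (Xs G (qs ++ nbrs G x) (A.erase x)) := by
  classical
  ext u
  simp only [Xs, Finset.mem_insert, Finset.mem_filter, List.mem_cons, List.mem_append]
  constructor
  · rintro ⟨huA, y, hy, hr⟩
    by_cases hux : u = x
    · exact Or.inl hux
    · have := W1 G hux hr
      rcases this with ⟨hyx, hr'⟩ | ⟨z, hz, hr'⟩
      · rcases hy with rfl | hy
        · exact absurd rfl hyx
        · exact Or.inr ⟨Finset.mem_erase.mpr ⟨hux, huA⟩, y, Or.inl hy, hr'⟩
      · exact Or.inr ⟨Finset.mem_erase.mpr ⟨hux, huA⟩, z, Or.inr ((mem_nbrs G).mpr hz), hr'⟩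
  · rintro (rfl | ⟨huA, z, (hz | hz), hr⟩)
    · exact ⟨hx, _, Or.inl rfl, SimpleGraph.Reachable.refl _⟩
    · exact ⟨(Finset.mem_erase.mp huA).2, z, Or.inr hz,
        SimpleGraph.Reachable.mono (withinGraph_mono G (Finset.erase_subset x A)) hr⟩
    · exact ⟨(Finset.mem_erase.mp huA).2, x, Or.inl rfl,
        W3 G hx huA ((mem_nbrs G).mp hz) hr⟩

lemma card_Xs_insert {x : V} {A : Finset V} (hx : x ∈ A) (qs : List V) :
    (Xs G (x :: qs) A).card = (Xs G (qs ++ nbrs G x) (A.erase x)).card + 1 := by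
  rw [Xs_insert G hx qs, Finset.card_insert_of_notMem]
  intro hmem
  have := Xs_subset G _ _ hmem
  exact (Finset.mem_erase.mp this).1 rfl

end Graph2

section Key
variable {V : Type*} [Fintype V] [DecidableEq V] (G : SimpleGraph V) [DecidableRel G.Adj]

lemma sum_mu_eq_one (p : ℝ) (A : Finset V) :
    ∑ S ∈ A.powerset, p ^ S.card * (1 - p) ^ (A.card - S.card) = 1 := by
  classical
  calc ∑ S ∈ A.powerset, p ^ S.card * (1 - p) ^ (A.card - S.card)
      = ∑ S ∈ A.powerset, (∏ _i ∈ S, p) * ∏ _i ∈ A \ S, (1 - p) := by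
        apply Finset.sum_congr rfl
        intro S hS
        rw [Finset.prod_const, Finset.prod_const,
          Finset.card_sdiff_of_subset (Finset.mem_powerset.mp hS)]
    _ = ∏ _i ∈ A, (p + (1 - p)) := (Finset.prod_add _ _ _).symm
    _ = 1 := by simp

open Classical in
lemma key_bound {p : ℝ} (hp0 : 0 ≤ p) (hp1 : p ≤ 1) (Δb : ℕ)
    (hΔ : ∀ x : V, (nbrs G x).length ≤ Δb) :
    ∀ (m : ℕ) (D : Finset V), D.card ≤ m → ∀ (q : List V) (j : ℕ),
      (∑ S ∈ D.powerset,
        if j ≤ (Xs G q S).card then p ^ S.card * (1 - p) ^ (D.card - S.card) else 0)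
        ≤ Bf p (q.length + (j - 1) * Δb) j := by
  have hq0 : (0:ℝ) ≤ 1 - p := by linarith
  intro m
  induction m with
  | zero =>
    intro D hD q j
    have hD0 : D = ∅ := Finset.card_eq_zero.mp (Nat.le_zero.mp hD)
    subst hD0
    rcases Nat.eq_zero_or_pos j with rfl | hj
    · simp [Bf_zero_right]
    · have hXs : (Xs G q (∅ : Finset V)).card = 0 := by
        simp [Finset.card_eq_zero, Finset.subset_empty.mp (Xs_subset G q ∅)]
      simp only [Finset.powerset_empty, Finset.sum_singleton, hXs]
      rw [if_neg (by omega)]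
      exact Bf_nonneg hp0 hp1 _ _
  | succ m ih =>
    intro D hD q j
    rcases Nat.eq_zero_or_pos j with rfl | hj
    · have : (∑ S ∈ D.powerset,
          if 0 ≤ (Xs G q S).card then p ^ S.card * (1 - p) ^ (D.card - S.card) else 0)
          = 1 := by
        rw [Finset.sum_congr rfl (fun S _ => if_pos (Nat.zero_le _))]
        exact sum_mu_eq_one p D
      rw [this, Bf_zero_right]
    · induction q with
      | nil =>
        have hz : ∀ S ∈ D.powerset,
            (if j ≤ (Xs G [] S).card then p ^ S.card * (1 - p) ^ (D.card - S.card) else 0) = 0 := by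
          intro S _
          rw [if_neg]
          rw [Xs_nil]
          simp only [Finset.card_empty]
          omega
        rw [Finset.sum_congr rfl hz, Finset.sum_const, smul_zero]
        exact Bf_nonneg hp0 hp1 _ _
      | cons x qs ihq =>
        by_cases hxD : x ∈ D
        · -- main case
          set D' := D.erase x with hD'
          have hxD' : x ∉ D' := Finset.notMem_erase x D
          have hDins : D = insert x D' := (Finset.insert_erase hxD).symm
          have hcard : D.card = D'.card + 1 := by
            rw [hDins, Finset.card_insert_of_notMem hxD']
          have hD'm : D'.card ≤ m := by
            have := hD
            omega
          set M := qs.length + (j - 1) * Δb with hM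
          have hterm1 : ∀ S ∈ D'.powerset,
              (if j ≤ (Xs G (x :: qs) S).card then p ^ S.card * (1 - p) ^ (D.card - S.card) else 0)
              = (1 - p) * (if j ≤ (Xs G qs S).card
                  then p ^ S.card * (1 - p) ^ (D'.card - S.card) else 0) := by
            intro S hS
            have hSsub := Finset.mem_powerset.mp hS
            have hxS : x ∉ S := fun h => hxD' (hSsub h)
            have hScard : S.card ≤ D'.card := Finset.card_le_card hSsub
            rw [Xs_drop G hxS qs]
            have hexp : D.card - S.card = (D'.card - S.card) + 1 := by omega
            rw [hexp, pow_succ]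
            split <;> ring
          have hterm2 : ∀ S ∈ D'.powerset,
              (if j ≤ (Xs G (x :: qs) (insert x S)).card
                then p ^ (insert x S).card * (1 - p) ^ (D.card - (insert x S).card) else 0)
              = p * (if j - 1 ≤ (Xs G (qs ++ nbrs G x) S).card
                  then p ^ S.card * (1 - p) ^ (D'.card - S.card) else 0) := by
            intro S hS
            have hSsub := Finset.mem_powerset.mp hS
            have hxS : x ∉ S := fun h => hxD' (hSsub h)
            have hScard : S.card ≤ D'.card := Finset.card_le_card hSsub
            have hins : x ∈ insert x S := Finset.mem_insert_self x S
            have hcX := card_Xs_insert G hins (qs := qs)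
            rw [Finset.erase_insert hxS] at hcX
            have hcond : (j ≤ (Xs G (x :: qs) (insert x S)).card)
                ↔ (j - 1 ≤ (Xs G (qs ++ nbrs G x) S).card) := by
              rw [hcX]; omega
            have hcardins : (insert x S).card = S.card + 1 :=
              Finset.card_insert_of_notMem hxS
            have hexp : D.card - (insert x S).card = D'.card - S.card := by
              rw [hcardins]; omega
            rw [if_congr hcond rfl rfl, hexp, hcardins, pow_succ]
            split <;> ring
          have hdom : (∑ S ∈ D.powerset,
              if j ≤ (Xs G (x :: qs) S).card then p ^ S.card * (1 - p) ^ (D.card - S.card) else 0)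
              = ∑ S ∈ (insert x D').powerset,
              (if j ≤ (Xs G (x :: qs) S).card then p ^ S.card * (1 - p) ^ (D.card - S.card) else 0) :=
            Finset.sum_congr (by rw [hDins]) (fun _ _ => rfl)
          rw [hdom, Finset.sum_powerset_insert hxD']
          rw [Finset.sum_congr rfl hterm1, Finset.sum_congr rfl hterm2]
          rw [← Finset.mul_sum, ← Finset.mul_sum]
          have hb1 : (∑ S ∈ D'.powerset,
              if j ≤ (Xs G qs S).card then p ^ S.card * (1 - p) ^ (D'.card - S.card) else 0)
              ≤ Bf p M j := ih D' hD'm qs j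
          have hb2 : (∑ S ∈ D'.powerset,
              if j - 1 ≤ (Xs G (qs ++ nbrs G x) S).card
                then p ^ S.card * (1 - p) ^ (D'.card - S.card) else 0)
              ≤ Bf p M (j - 1) := by
            rcases Nat.eq_or_lt_of_le hj with hj1 | hj2
            · -- j = 1, j - 1 = 0
              have : j - 1 = 0 := by omega
              rw [this, Bf_zero_right]
              have := ih D' hD'm (qs ++ nbrs G x) 0
              rw [Bf_zero_right] at this
              simpa using this
            · -- j ≥ 2
              refine le_trans (ih D' hD'm (qs ++ nbrs G x) (j - 1)) ?_
              apply Bf_mono hp0 hp1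
              have hlen : (qs ++ nbrs G x).length = qs.length + (nbrs G x).length := by
                simp
              have := hΔ x
              rw [hlen]
              have hj2' : 2 ≤ j := hj2
              have : (j - 1 - 1) * Δb + Δb ≤ (j - 1) * Δb := by
                calc (j - 1 - 1) * Δb + Δb = ((j - 1 - 1) + 1) * Δb := by ring
                  _ ≤ (j - 1) * Δb := Nat.mul_le_mul_right _ (by omega)
              omega
          calc (1 - p) * (∑ S ∈ D'.powerset,
                if j ≤ (Xs G qs S).card then p ^ S.card * (1 - p) ^ (D'.card - S.card) else 0)
              + p * (∑ S ∈ D'.powerset,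
                if j - 1 ≤ (Xs G (qs ++ nbrs G x) S).card
                  then p ^ S.card * (1 - p) ^ (D'.card - S.card) else 0)
              ≤ (1 - p) * Bf p M j + p * Bf p M (j - 1) := by
                apply add_le_add
                · exact mul_le_mul_of_nonneg_left hb1 hq0
                · exact mul_le_mul_of_nonneg_left hb2 hp0
            _ = Bf p (M + 1) j := by rw [show Bf p (M+1) j = p * Bf p M (j-1) + (1-p) * Bf p M j from rfl]; ring
            _ = Bf p ((x :: qs).length + (j - 1) * Δb) j := by
                congr 1
                simp only [hM, List.length_cons]
                ring
        · -- x ∉ D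
          have hz : ∀ S ∈ D.powerset,
              (if j ≤ (Xs G (x :: qs) S).card then p ^ S.card * (1 - p) ^ (D.card - S.card) else 0)
              = (if j ≤ (Xs G qs S).card then p ^ S.card * (1 - p) ^ (D.card - S.card) else 0) := by
            intro S hS
            have hxS : x ∉ S := fun h => hxD (Finset.mem_powerset.mp hS h)
            rw [Xs_drop G hxS qs]
          rw [Finset.sum_congr rfl hz]
          refine le_trans ihq ?_
          apply Bf_mono hp0 hp1
          simp only [List.length_cons]
          omega

end Key

open Classical in
/-- Sampling each vertex of a graph with max degree `Δ` independently with probability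
`(1-ε)/Δ` leaves, with probability at least `1 - 1/n` (for `n` large enough), no connected
component larger than `(4/ε²)·log n`. -/
theorem stmt0 (ε : ℝ) (hε0 : 0 < ε) (hε1 : ε < 1) :
    ∃ N : ℕ, ∀ n : ℕ, N ≤ n → ∀ G : SimpleGraph (Fin n), ∀ _ : DecidableRel G.Adj,
      0 < G.maxDegree →
      (∑ S ∈ (Finset.univ : Finset (Finset (Fin n))).filter
          (fun S => (4 / ε ^ 2) * Real.log n < (maxCompSize G S : ℝ)),
        ((1 - ε) / (G.maxDegree : ℝ)) ^ S.card
          * (1 - (1 - ε) / (G.maxDegree : ℝ)) ^ (n - S.card))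
        ≤ 1 / (n : ℝ) := by
  refine ⟨1, ?_⟩
  intro n hn G instG hΔpos
  classical
  set Δ : ℕ := G.maxDegree with hΔdef
  set p : ℝ := (1 - ε) / (Δ : ℝ) with hpdef
  have hΔ1 : 1 ≤ Δ := hΔpos
  have hΔR : (1:ℝ) ≤ (Δ : ℝ) := by exact_mod_cast hΔ1
  have hΔR0 : (0:ℝ) < (Δ : ℝ) := by linarith
  have hε1' : (0:ℝ) < 1 - ε := by linarith
  have hp0 : 0 ≤ p := div_nonneg (by linarith) (le_of_lt hΔR0)
  have hple : p ≤ 1 - ε := by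
    rw [hpdef]
    exact div_le_self (by linarith) hΔR
  have hp1 : p ≤ 1 := by linarith
  have hn1 : (1:ℝ) ≤ (n : ℝ) := by exact_mod_cast hn
  have hnR0 : (0:ℝ) < (n : ℝ) := by linarith
  have hlogn : 0 ≤ Real.log n := Real.log_nonneg hn1
  have hc : 0 ≤ 4 / ε ^ 2 * Real.log n := by positivity
  set k : ℕ := ⌊4 / ε ^ 2 * Real.log n⌋₊ + 1 with hk
  have hk1 : 1 ≤ k := Nat.le_add_left 1 _
  have hkgt : 4 / ε ^ 2 * Real.log n < (k : ℝ) := by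
    rw [hk]
    push_cast
    exact Nat.lt_floor_add_one _
  have hnbrs : ∀ x : Fin n, (nbrs G x).length ≤ Δ := by
    intro x
    rw [length_nbrs]
    exact G.degree_le_maxDegree x
  -- step A : bad S has a vertex with big explored component
  have hbadk : ∀ S : Finset (Fin n), (4 / ε ^ 2) * Real.log n < (maxCompSize G S : ℝ) →
      ∃ v, k ≤ (Xs G [v] S).card := by
    intro S hS
    have h1 : ⌊4 / ε ^ 2 * Real.log n⌋₊ < maxCompSize G S := (Nat.floor_lt hc).mpr hS
    have h2 : k ≤ maxCompSize G S := h1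
    rw [maxCompSize, Finset.le_sup_iff (by exact Nat.succ_pos _ : (⊥:ℕ) < k)] at h2
    obtain ⟨v, hvS, hv⟩ := h2
    refine ⟨v, le_trans hv (Finset.card_le_card ?_)⟩
    intro u hu
    simp only [Finset.mem_filter] at hu
    have : u ∈ S ∧ ∃ x ∈ [v], (withinGraph G S).Reachable x u :=
      ⟨hu.1, v, by simp, hu.2⟩
    simpa [Xs] using this
  set μ : Finset (Fin n) → ℝ := fun S => p ^ S.card * (1 - p) ^ (n - S.card) with hμdef
  have hμ0 : ∀ S, 0 ≤ μ S := fun S =>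
    mul_nonneg (pow_nonneg hp0 _) (pow_nonneg (by linarith) _)
  have hf0 : ∀ (v : Fin n) (S : Finset (Fin n)),
      0 ≤ (if k ≤ (Xs G [v] S).card then μ S else 0) := by
    intro v S
    split
    · exact hμ0 S
    · exact le_refl 0
  have step1 : (∑ S ∈ (Finset.univ : Finset (Finset (Fin n))).filter
        (fun S => (4 / ε ^ 2) * Real.log n < (maxCompSize G S : ℝ)), μ S)
      ≤ ∑ v : Fin n, ∑ S ∈ (Finset.univ : Finset (Finset (Fin n))),
          (if k ≤ (Xs G [v] S).card then μ S else 0) := by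
    rw [Finset.sum_comm]
    calc (∑ S ∈ (Finset.univ : Finset (Finset (Fin n))).filter
          (fun S => (4 / ε ^ 2) * Real.log n < (maxCompSize G S : ℝ)), μ S)
        ≤ ∑ S ∈ (Finset.univ : Finset (Finset (Fin n))).filter
          (fun S => (4 / ε ^ 2) * Real.log n < (maxCompSize G S : ℝ)),
            ∑ v : Fin n, (if k ≤ (Xs G [v] S).card then μ S else 0) := by
          apply Finset.sum_le_sum
          intro S hS
          obtain ⟨v, hv⟩ := hbadk S (Finset.mem_filter.mp hS).2
          calc μ S = (if k ≤ (Xs G [v] S).card then μ S else 0) := (if_pos hv).symm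
            _ ≤ ∑ v : Fin n, (if k ≤ (Xs G [v] S).card then μ S else 0) :=
              Finset.single_le_sum (fun i _ => hf0 i S) (Finset.mem_univ v)
      _ ≤ ∑ S ∈ (Finset.univ : Finset (Finset (Fin n))),
            ∑ v : Fin n, (if k ≤ (Xs G [v] S).card then μ S else 0) := by
          apply Finset.sum_le_sum_of_subset_of_nonneg (Finset.filter_subset _ _)
          intro S _ _
          exact Finset.sum_nonneg (fun v _ => hf0 v S)
  set M : ℕ := 1 + (k - 1) * Δ with hM
  have step2 : ∀ v : Fin n, (∑ S ∈ (Finset.univ : Finset (Finset (Fin n))),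
      (if k ≤ (Xs G [v] S).card then μ S else 0)) ≤ Bf p M k := by
    intro v
    have hkey := key_bound G hp0 hp1 Δ hnbrs (Finset.univ : Finset (Fin n)).card
      (Finset.univ : Finset (Fin n)) (le_refl _) [v] k
    have hcardu : (Finset.univ : Finset (Fin n)).card = n := by
      rw [Finset.card_univ, Fintype.card_fin]
    rw [Finset.powerset_univ, hcardu] at hkey
    simpa [hμdef, hM] using hkey
  have hchain : (∑ S ∈ (Finset.univ : Finset (Finset (Fin n))).filter
        (fun S => (4 / ε ^ 2) * Real.log n < (maxCompSize G S : ℝ)), μ S)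
      ≤ (n : ℝ) * Bf p M k := by
    refine le_trans step1 ?_
    calc (∑ v : Fin n, ∑ S ∈ (Finset.univ : Finset (Finset (Fin n))),
          (if k ≤ (Xs G [v] S).card then μ S else 0))
        ≤ ∑ _v : Fin n, Bf p M k := Finset.sum_le_sum (fun v _ => step2 v)
      _ = (n : ℝ) * Bf p M k := by
          rw [Finset.sum_const, Finset.card_univ, Fintype.card_fin, nsmul_eq_mul]
  -- numeric bound on Bf
  set t : ℝ := (1 - ε)⁻¹ with ht'
  have ht1 : 1 ≤ t := by
    rw [ht']
    rw [le_inv_comm₀ one_pos hε1']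
    linarith
  have ht0 : 0 < t := lt_of_lt_of_le one_pos ht1
  have hBf1 : Bf p M k ≤ (1 - p + p * t) ^ M / t ^ k := Bf_chernoff hp0 hp1 ht1 M k
  have hbase : 0 ≤ 1 - p + p * t := by nlinarith
  have hbase1 : 1 - p + p * t ≤ Real.exp (p * (t - 1)) := by
    have := Real.add_one_le_exp (p * (t - 1))
    nlinarith
  have hpow : (1 - p + p * t) ^ M ≤ Real.exp ((M : ℝ) * (p * (t - 1))) := by
    calc (1 - p + p * t) ^ M ≤ (Real.exp (p * (t - 1))) ^ M := pow_le_pow_left₀ hbase hbase1 M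
      _ = Real.exp ((M : ℝ) * (p * (t - 1))) := (Real.exp_nat_mul _ M).symm
  have hMp : (M : ℝ) * p ≤ (k : ℝ) * (1 - ε) := by
    have hcast : (M : ℝ) = 1 + ((k : ℝ) - 1) * (Δ : ℝ) := by
      rw [hM]
      push_cast [Nat.cast_sub hk1]
      ring
    have hΔp : (Δ : ℝ) * p = 1 - ε := by
      rw [hpdef]
      field_simp
    have hk1R : (1:ℝ) ≤ (k : ℝ) := by exact_mod_cast hk1
    calc (M : ℝ) * p = p + ((k:ℝ) - 1) * ((Δ:ℝ) * p) := by rw [hcast]; ring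
      _ = p + ((k:ℝ) - 1) * (1 - ε) := by rw [hΔp]
      _ ≤ (1 - ε) + ((k:ℝ) - 1) * (1 - ε) := by linarith
      _ = (k : ℝ) * (1 - ε) := by ring
  have htm1 : 0 ≤ t - 1 := by linarith
  have ht1e : (1 - ε) * (t - 1) = ε := by
    rw [ht']
    field_simp
    ring
  have hexp1 : (M : ℝ) * (p * (t - 1)) ≤ (k : ℝ) * ε := by
    calc (M : ℝ) * (p * (t - 1)) = ((M : ℝ) * p) * (t - 1) := by ring
      _ ≤ ((k : ℝ) * (1 - ε)) * (t - 1) := mul_le_mul_of_nonneg_right hMp htm1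
      _ = (k : ℝ) * ((1 - ε) * (t - 1)) := by ring
      _ = (k : ℝ) * ε := by rw [ht1e]
  have htk : (1:ℝ) / t ^ k = (1 - ε) ^ k := by
    rw [ht', inv_pow, one_div, inv_inv]
  have hBf2 : Bf p M k ≤ (Real.exp ε * (1 - ε)) ^ k := by
    calc Bf p M k ≤ (1 - p + p * t) ^ M / t ^ k := hBf1
      _ = (1 - p + p * t) ^ M * ((1:ℝ) / t ^ k) := by ring
      _ ≤ Real.exp ((M : ℝ) * (p * (t - 1))) * ((1:ℝ) / t ^ k) := by
          apply mul_le_mul_of_nonneg_right hpow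
          positivity
      _ ≤ Real.exp ((k : ℝ) * ε) * ((1:ℝ) / t ^ k) := by
          apply mul_le_mul_of_nonneg_right (Real.exp_le_exp.mpr hexp1)
          positivity
      _ = Real.exp ((k : ℝ) * ε) * (1 - ε) ^ k := by rw [htk]
      _ = (Real.exp ε) ^ k * (1 - ε) ^ k := by
          rw [Real.exp_nat_mul]
      _ = (Real.exp ε * (1 - ε)) ^ k := (mul_pow _ _ _).symm
  have hBf3 : Bf p M k ≤ Real.exp (-(2 * Real.log n)) := by
    calc Bf p M k ≤ (Real.exp ε * (1 - ε)) ^ k := hBf2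
      _ ≤ (Real.exp (-(ε ^ 2) / 2)) ^ k := by
          apply pow_le_pow_left₀ (by positivity) (exp_mul_one_sub_le hε0 hε1) k
      _ = Real.exp ((k : ℝ) * (-(ε ^ 2) / 2)) := (Real.exp_nat_mul _ k).symm
      _ ≤ Real.exp (-(2 * Real.log n)) := by
          apply Real.exp_le_exp.mpr
          have h2 : 2 * Real.log n ≤ (k : ℝ) * (ε ^ 2 / 2) := by
            have := mul_le_mul_of_nonneg_right (le_of_lt hkgt) (le_of_lt (by positivity : (0:ℝ) < ε ^ 2 / 2))
            calc 2 * Real.log n = (4 / ε ^ 2 * Real.log n) * (ε ^ 2 / 2) := by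
                  field_simp
                  ring
              _ ≤ (k : ℝ) * (ε ^ 2 / 2) := this
          linarith
  have hfinal : (n : ℝ) * Bf p M k ≤ 1 / (n : ℝ) := by
    have hexpn : Real.exp (-(2 * Real.log n)) = ((n:ℝ) * (n:ℝ))⁻¹ := by
      rw [Real.exp_neg, two_mul, Real.exp_add, Real.exp_log hnR0]
    calc (n : ℝ) * Bf p M k ≤ (n : ℝ) * Real.exp (-(2 * Real.log n)) :=
        mul_le_mul_of_nonneg_left hBf3 (le_of_lt hnR0)
      _ = (n : ℝ) * ((n:ℝ) * (n:ℝ))⁻¹ := by rw [hexpn]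
      _ = 1 / (n : ℝ) := by field_simp
  exact le_trans hchain hfinal
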